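/- Let σ be a permutation of S_k with cycle type μ = (μ_1, …, μ_ℓ), and let Moeb(σ) = ∏_{i=1}^{ℓ} Cat(μ_i − 1). Then for any transposition τ in S_k, Moeb(τσ) ≤ 6·k^(3/2)·Moeb(σ). -/

import Mathlib

open Nat

lemma cb_upper : ∀ n : ℕ, (3*n+1) * centralBinom n ^ 2 ≤ 16 ^ n := by
  intro n
  induction n with
  | zero => simp [centralBinom]
  | succ n ih =>
    have h1 : (n + 1) * centralBinom (n + 1) = 2 * (2 * n + 1) * centralBinom n :=
      succ_mul_centralBinom_succ n
    have hpos : 0 < (n+1)^2 := by positivity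
    refine Nat.le_of_mul_le_mul_left ?_ hpos
    have key : (n+1)^2 * ((3*(n+1)+1) * centralBinom (n+1) ^ 2)
        = (3*n+4) * (2*(2*n+1))^2 * centralBinom n ^ 2 := by
      have : ((n+1) * centralBinom (n+1))^2 = (2*(2*n+1)*centralBinom n)^2 := by rw [h1]
      ring_nf
      ring_nf at this
      nlinarith [this]
    rw [key]
    calc (3*n+4) * (2*(2*n+1))^2 * centralBinom n ^ 2
        ≤ 16 * (n+1)^2 * ((3*n+1) * centralBinom n ^ 2) := by nlinarith [sq_nonneg (centralBinom n)]
      _ ≤ 16 * (n+1)^2 * 16^n := by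
          exact Nat.mul_le_mul_left _ ih
      _ = (n+1)^2 * 16^(n+1) := by ring

lemma cb_lower : ∀ n : ℕ, 1 ≤ n → 16 ^ n ≤ 4 * n * centralBinom n ^ 2 := by
  intro n
  induction n with
  | zero => omega
  | succ n ih =>
    intro _
    rcases Nat.eq_zero_or_pos n with h0 | hn
    · subst h0; simp [centralBinom]
    have ih' := ih hn
    have h1 : (n + 1) * centralBinom (n + 1) = 2 * (2 * n + 1) * centralBinom n :=
      succ_mul_centralBinom_succ n
    have hpos : 0 < (n+1)^2 := by positivity
    refine Nat.le_of_mul_le_mul_left ?_ hpos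
    have key : (n+1)^2 * (4 * (n+1) * centralBinom (n+1) ^ 2)
        = 4*(n+1) * (2*(2*n+1))^2 * centralBinom n ^ 2 := by
      have : ((n+1) * centralBinom (n+1))^2 = (2*(2*n+1)*centralBinom n)^2 := by rw [h1]
      ring_nf
      ring_nf at this
      nlinarith [this]
    rw [key]
    calc (n+1)^2 * 16^(n+1) = 16 * (n+1) * ((n+1) * 16^n) := by ring
      _ ≤ 16 * (n+1) * ((n+1) * (4 * n * centralBinom n ^ 2)) :=
          Nat.mul_le_mul_left _ (Nat.mul_le_mul_left _ ih')
      _ ≤ 4*(n+1) * (2*(2*n+1))^2 * centralBinom n ^ 2 := by nlinarith [sq_nonneg (centralBinom n)]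


lemma catalan_mul_le_add (a b : ℕ) : catalan a * catalan b ≤ catalan (a + b + 1) := by
  rw [catalan_succ]
  have ha : a < (a+b).succ := by omega
  have := Finset.single_le_sum (f := fun i : Fin (a+b).succ => catalan i * catalan (a + b - i))
    (fun i _ => Nat.zero_le _) (Finset.mem_univ (⟨a, ha⟩ : Fin (a+b).succ))
  simpa using this

lemma catalan_le_succ (n : ℕ) : catalan n ≤ catalan (n + 1) := by
  have := catalan_mul_le_add n 0
  simpa using this

lemma catalan_succ_le_four_mul (n : ℕ) : catalan (n + 1) ≤ 4 * catalan n := by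
  have h1 : (n + 1) * catalan n = centralBinom n := succ_mul_catalan_eq_centralBinom n
  have h2 : (n + 2) * catalan (n+1) = centralBinom (n+1) := succ_mul_catalan_eq_centralBinom (n+1)
  have h3 : (n + 1) * centralBinom (n + 1) = 2 * (2 * n + 1) * centralBinom n :=
    succ_mul_centralBinom_succ n
  have hpos : 0 < (n+1)*(n+2) := by positivity
  refine Nat.le_of_mul_le_mul_left ?_ hpos
  have e1 : (n+1)*(n+2) * catalan (n+1) = (n+1) * centralBinom (n+1) := by
    rw [← h2]; ring
  have e2 : (n+1)*(n+2) * (4 * catalan n) = 4 * (n+2) * ((n+1) * catalan n) := by ring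
  rw [e1, e2, h1, h3]
  nlinarith [centralBinom_pos n]

/-- The key analytic inequality, in ℕ. -/
lemma key_nat {a b : ℕ} (ha : 1 ≤ a) (hb : 1 ≤ b) :
    catalan (a+b+1) ^ 2 ≤ 4 * (a+b+2)^3 * (catalan a * catalan b) ^ 2 := by
  set n := a + b + 1 with hn
  have hCn : (n + 1) * catalan n = centralBinom n := succ_mul_catalan_eq_centralBinom n
  have hCa : (a + 1) * catalan a = centralBinom a := succ_mul_catalan_eq_centralBinom a
  have hCb : (b + 1) * catalan b = centralBinom b := succ_mul_catalan_eq_centralBinom b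
  have hU : (3*n+1) * centralBinom n ^ 2 ≤ 16 ^ n := cb_upper n
  have hLa : 16 ^ a ≤ 4 * a * centralBinom a ^ 2 := cb_lower a ha
  have hLb : 16 ^ b ≤ 4 * b * centralBinom b ^ 2 := cb_lower b hb
  have hpos : 0 < (3*n+1) * (n+1)^2 := by positivity
  refine Nat.le_of_mul_le_mul_left ?_ hpos
  have step1 : (3*n+1) * (n+1)^2 * catalan n ^ 2 = (3*n+1) * centralBinom n ^ 2 := by
    rw [← hCn]; ring
  have step2 : 16 ^ n = 16 * 16^a * 16^b := by
    rw [hn, pow_add, pow_add, pow_one]; ring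
  have step3 : 16 * 16^a * 16^b ≤ 16 * (4 * a * centralBinom a ^ 2) * (4 * b * centralBinom b ^ 2) :=
    Nat.mul_le_mul (Nat.mul_le_mul_left 16 hLa) hLb
  have step4 : 16 * (4 * a * centralBinom a ^ 2) * (4 * b * centralBinom b ^ 2)
      = 256 * a * b * (a+1)^2 * (b+1)^2 * (catalan a * catalan b)^2 := by
    rw [← hCa, ← hCb]; ring
  have step5 : 256 * a * b * (a+1)^2 * (b+1)^2 ≤ (3*n+1) * (n+1)^2 * (4 * (n+1)^3) := by
    have hab : 4*(a*b) ≤ (a+b+2)^2 := by zify; nlinarith [sq_nonneg ((a:ℤ)-b)]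
    have hAB : 4*((a+1)*(b+1)) ≤ (a+b+2)^2 := by zify; nlinarith [sq_nonneg ((a:ℤ)-b)]
    have h7 : n+1 = a+b+2 := by omega
    have h8 : a+b+2 ≤ 3*n+1 := by omega
    calc 256*a*b*(a+1)^2*(b+1)^2 = 4*(4*(a*b))*(4*((a+1)*(b+1)))^2 := by ring
      _ ≤ 4*(a+b+2)^2*((a+b+2)^2)^2 :=
          Nat.mul_le_mul (Nat.mul_le_mul_left 4 hab) (Nat.pow_le_pow_left hAB 2)
      _ = 4*((a+b+2)*(a+b+2)^5) := by ring
      _ ≤ 4*((3*n+1)*(a+b+2)^5) :=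
          Nat.mul_le_mul_left 4 (Nat.mul_le_mul_right _ h8)
      _ = (3*n+1) * (n+1)^2 * (4 * (n+1)^3) := by rw [h7]; ring
  calc (3*n+1) * (n+1)^2 * catalan n ^ 2
      = (3*n+1) * centralBinom n ^ 2 := step1
    _ ≤ 16 ^ n := hU
    _ = 16 * 16^a * 16^b := step2
    _ ≤ 256 * a * b * (a+1)^2 * (b+1)^2 * (catalan a * catalan b)^2 := by
        rw [← step4]; exact step3
    _ ≤ (3*n+1) * (n+1)^2 * (4 * (n+1)^3) * (catalan a * catalan b)^2 :=
        Nat.mul_le_mul_right _ step5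
    _ = (3*n+1) * (n+1)^2 * (4 * (n+1)^3 * (catalan a * catalan b)^2) := by ring

lemma rpow_three_halves_eq_sqrt (x : ℝ) (hx : 0 ≤ x) :
    x ^ ((3:ℝ)/2) = Real.sqrt (x ^ 3) := by
  rw [Real.sqrt_eq_rpow, ← Real.rpow_natCast x 3, ← Real.rpow_mul hx]
  norm_num

/-- The key analytic inequality, in ℝ. -/
lemma key_real {a b k : ℕ} (ha : 1 ≤ a) (hb : 1 ≤ b) (hk : a + b + 2 ≤ k) :
    (catalan (a+b+1) : ℝ) ≤ 6 * (k:ℝ) ^ ((3:ℝ)/2) * (catalan a * catalan b) := by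
  have hnat := key_nat ha hb
  have hsq : (catalan (a+b+1) : ℝ)^2 ≤ 4 * ((a:ℝ)+b+2)^3 * ((catalan a * catalan b : ℕ) : ℝ)^2 := by
    have := (Nat.cast_le (α := ℝ)).mpr hnat
    push_cast at this ⊢
    nlinarith [this]
  have h1 : (catalan (a+b+1) : ℝ) ≤ Real.sqrt (4 * ((a:ℝ)+b+2)^3 * ((catalan a * catalan b : ℕ) : ℝ)^2) := by
    have := Real.sqrt_le_sqrt hsq
    · rw [Real.sqrt_sq (by positivity)] at this
      exact this
  have h2 : Real.sqrt (4 * ((a:ℝ)+b+2)^3 * ((catalan a * catalan b : ℕ) : ℝ)^2)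
      = 2 * Real.sqrt (((a:ℝ)+b+2)^3) * ((catalan a * catalan b : ℕ) : ℝ) := by
    rw [show (4 : ℝ) * ((a:ℝ)+b+2)^3 * ((catalan a * catalan b : ℕ) : ℝ)^2
        = (2 * ((catalan a * catalan b : ℕ) : ℝ))^2 * ((a:ℝ)+b+2)^3 by ring,
      Real.sqrt_mul (by positivity), Real.sqrt_sq (by positivity)]
    ring
  have h3 : Real.sqrt (((a:ℝ)+b+2)^3) ≤ (k:ℝ) ^ ((3:ℝ)/2) := by
    rw [← rpow_three_halves_eq_sqrt _ (by positivity)]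
    apply Real.rpow_le_rpow (by positivity) _ (by norm_num)
    exact_mod_cast hk
  calc (catalan (a+b+1) : ℝ) ≤ 2 * Real.sqrt (((a:ℝ)+b+2)^3) * ((catalan a * catalan b : ℕ) : ℝ) := by
        rw [← h2]; exact h1
    _ ≤ 6 * (k:ℝ) ^ ((3:ℝ)/2) * ((catalan a * catalan b : ℕ) : ℝ) := by
        have hcc : (0:ℝ) ≤ ((catalan a * catalan b : ℕ) : ℝ) := by positivity
        have hK : (0:ℝ) ≤ (k:ℝ) ^ ((3:ℝ)/2) := by positivity
        nlinarith [mul_le_mul_of_nonneg_right h3 hcc]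
    _ = 6 * (k:ℝ) ^ ((3:ℝ)/2) * (catalan a * catalan b) := by push_cast; ring

open Equiv Equiv.Perm Nat Finset

lemma catalan_pos' (n : ℕ) : 0 < catalan n := by
  have h := succ_mul_catalan_eq_centralBinom n
  have hcb := centralBinom_pos n
  rcases Nat.eq_zero_or_pos (catalan n) with h0 | h1
  · rw [h0, Nat.mul_zero] at h
    omega
  · exact h1

variable {α : Type*} [Fintype α] [DecidableEq α]

/-- Merging a fixed point into a cycle via a transposition. -/
lemma merge_one {f : Perm α} {x y : α} (hf : f.IsCycle) (hx : x ∈ f.support)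
    (hy : y ∉ f.support) :
    (swap x y * f).IsCycle ∧ (swap x y * f).support = insert y f.support := by
  have hxy : x ≠ y := fun h => hy (h ▸ hx)
  set h : Perm α := swap x y * f with hh
  have hfy : f y = y := notMem_support.mp hy
  have hyx : h y = x := by
    simp [hh, mul_apply, hfy]
  have happ : ∀ z, h z = swap x y (f z) := fun z => rfl
  -- computation of h on the support of f
  have hsupp : ∀ z ∈ f.support, h z ≠ z ∧ (f z = x → h z = y) ∧ (f z ≠ x → h z = f z) := by
    intro z hz
    have hfz : f z ∈ f.support := apply_mem_support.mpr hz
    have hfzy : f z ≠ y := fun hc => hy (hc ▸ hfz)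
    by_cases hfzx : f z = x
    · have : h z = y := by rw [happ, hfzx, swap_apply_left]
      refine ⟨?_, fun _ => this, fun hc => absurd hfzx hc⟩
      rw [this]; exact fun hc => hy (hc ▸ hz)
    · have : h z = f z := by rw [happ, swap_apply_of_ne_of_ne hfzx hfzy]
      exact ⟨this ▸ mem_support.mp hz, fun hc => absurd hc hfzx, fun _ => this⟩
  -- orbit
  have key : ∀ i : ℕ, h.SameCycle x ((f ^ i) x) := by
    intro i
    induction i with
    | zero => simpa using SameCycle.refl h x
    | succ n ih =>
      have hz : (f ^ n) x ∈ f.support := pow_apply_mem_support.mpr hx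
      by_cases hfx : f ((f ^ n) x) = x
      · have : (f ^ (n+1)) x = x := by rw [_root_.pow_succ', mul_apply, hfx]
        rw [this]
      · have h1 : h ((f ^ n) x) = (f ^ (n+1)) x := by
          rw [(hsupp _ hz).2.2 hfx, _root_.pow_succ', mul_apply]
        exact ih.trans ⟨1, by simpa using h1⟩
  have hxyc : h.SameCycle y x := ⟨1, by simpa using hyx⟩
  have hmem : ∀ z, z ∈ f.support → h.SameCycle x z := by
    intro z hz
    obtain ⟨i, hi⟩ := hf.exists_pow_eq (mem_support.mp hx) (mem_support.mp hz)
    exact hi ▸ key i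
  have hcyc : h.IsCycle := by
    refine ⟨y, by rw [hyx]; exact hxy, fun z hz => ?_⟩
    have hzs : z ∈ h.support := mem_support.mpr hz
    have : z ∈ (swap x y).support ∪ f.support :=
      support_mul_le (swap x y) f hzs
    rw [support_swap hxy] at this
    simp only [mem_union, mem_insert, mem_singleton] at this
    rcases this with (rfl | rfl) | hzf
    · exact hxyc
    · exact SameCycle.refl _ _
    · exact hxyc.trans (hmem z hzf)
  refine ⟨hcyc, ?_⟩
  apply Finset.Subset.antisymm
  · intro z hz
    have : z ∈ (swap x y).support ∪ f.support := support_mul_le (swap x y) f hz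
    rw [support_swap hxy] at this
    simp only [mem_union, mem_insert, mem_singleton] at this
    rcases this with (rfl | rfl) | hzf
    · exact Finset.mem_insert_of_mem hx
    · exact Finset.mem_insert_self _ _
    · exact Finset.mem_insert_of_mem hzf
  · intro z hz
    rcases Finset.mem_insert.mp hz with rfl | hzf
    · exact mem_support.mpr (by rw [hyx]; exact hxy)
    · exact mem_support.mpr (hsupp z hzf).1

/-- Merging two disjoint cycles via a transposition. -/
lemma merge_two {f g : Perm α} {x y : α} (hf : f.IsCycle) (hg : g.IsCycle)
    (hd : f.Disjoint g) (hx : x ∈ f.support) (hy : y ∈ g.support) :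
    (swap x y * (f * g)).IsCycle ∧ (swap x y * (f * g)).support = f.support ∪ g.support := by
  have hds : _root_.Disjoint f.support g.support := disjoint_iff_disjoint_support.mp hd
  have hxg : x ∉ g.support := Finset.disjoint_left.mp hds hx
  have hyf : y ∉ f.support := Finset.disjoint_right.mp hds hy
  have hxy : x ≠ y := fun h => hyf (h ▸ hx)
  set h : Perm α := swap x y * (f * g) with hh
  have happf : ∀ z ∈ f.support, h z = swap x y (f z) := by
    intro z hz
    have : g z = z := notMem_support.mp (Finset.disjoint_left.mp hds hz)
    simp [hh, mul_apply, this]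
  have happg : ∀ z ∈ g.support, h z = swap x y (g z) := by
    intro z hz
    have hgz : g z ∈ g.support := apply_mem_support.mpr hz
    have : f (g z) = g z := notMem_support.mp (Finset.disjoint_right.mp hds hgz)
    simp [hh, mul_apply, this]
  -- behaviour on support of f
  have hsf : ∀ z ∈ f.support, h z ≠ z ∧ (f z = x → h z = y) ∧ (f z ≠ x → h z = f z) := by
    intro z hz
    have hfz : f z ∈ f.support := apply_mem_support.mpr hz
    have hfzy : f z ≠ y := fun hc => hyf (hc ▸ hfz)
    by_cases hfzx : f z = x
    · have he : h z = y := by rw [happf z hz, hfzx, swap_apply_left]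
      exact ⟨he ▸ fun hc => hyf (hc ▸ hz), fun _ => he, fun hc => absurd hfzx hc⟩
    · have he : h z = f z := by rw [happf z hz, swap_apply_of_ne_of_ne hfzx hfzy]
      exact ⟨he ▸ mem_support.mp hz, fun hc => absurd hc hfzx, fun _ => he⟩
  have hsg : ∀ z ∈ g.support, h z ≠ z ∧ (g z = y → h z = x) ∧ (g z ≠ y → h z = g z) := by
    intro z hz
    have hgz : g z ∈ g.support := apply_mem_support.mpr hz
    have hgzx : g z ≠ x := fun hc => hxg (hc ▸ hgz)
    by_cases hgzy : g z = y
    · have he : h z = x := by rw [happg z hz, hgzy, swap_apply_right]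
      exact ⟨he ▸ fun hc => hxg (hc ▸ hz), fun _ => he, fun hc => absurd hgzy hc⟩
    · have he : h z = g z := by rw [happg z hz, swap_apply_of_ne_of_ne hgzx hgzy]
      exact ⟨he ▸ mem_support.mp hz, fun hc => absurd hc hgzy, fun _ => he⟩
  -- orbits
  have keyf : ∀ i : ℕ, h.SameCycle x ((f ^ i) x) := by
    intro i
    induction i with
    | zero => simpa using SameCycle.refl h x
    | succ n ih =>
      have hz : (f ^ n) x ∈ f.support := pow_apply_mem_support.mpr hx
      by_cases hfx : f ((f ^ n) x) = x
      · have : (f ^ (n+1)) x = x := by rw [_root_.pow_succ', mul_apply, hfx]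
        rw [this]
      · have h1 : h ((f ^ n) x) = (f ^ (n+1)) x := by
          rw [(hsf _ hz).2.2 hfx, _root_.pow_succ', mul_apply]
        exact ih.trans ⟨1, by simpa using h1⟩
  have keyg : ∀ i : ℕ, h.SameCycle y ((g ^ i) y) := by
    intro i
    induction i with
    | zero => simpa using SameCycle.refl h y
    | succ n ih =>
      have hz : (g ^ n) y ∈ g.support := pow_apply_mem_support.mpr hy
      by_cases hgy : g ((g ^ n) y) = y
      · have : (g ^ (n+1)) y = y := by rw [_root_.pow_succ', mul_apply, hgy]
        rw [this]
      · have h1 : h ((g ^ n) y) = (g ^ (n+1)) y := by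
          rw [(hsg _ hz).2.2 hgy, _root_.pow_succ', mul_apply]
        exact ih.trans ⟨1, by simpa using h1⟩
  -- the link from x to y
  have hlink : h.SameCycle x y := by
    have hne1 : f ≠ 1 := by
      intro hc; rw [hc] at hx; simp at hx
    have hord : 1 ≤ orderOf f := Nat.one_le_iff_ne_zero.mpr (orderOf_pos f).ne'
    set n := orderOf f with hn
    have hfn : (f ^ n) x = x := by rw [pow_orderOf_eq_one]; rfl
    have hz : (f ^ (n-1)) x ∈ f.support := pow_apply_mem_support.mpr hx
    have hstep : f ((f ^ (n-1)) x) = x := by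
      rw [← mul_apply, ← _root_.pow_succ']
      have : n - 1 + 1 = n := Nat.succ_pred_eq_of_pos (orderOf_pos f)
      rw [this, hfn]
    have : h ((f ^ (n-1)) x) = y := (hsf _ hz).2.1 hstep
    exact (keyf (n-1)).trans ⟨1, by simpa using this⟩
  have hxmem : h x ≠ x := by
    have hfx : f x ≠ x := mem_support.mp hx
    by_cases hfxx : f x = x
    · exact absurd hfxx hfx
    · rcases eq_or_ne (f x) x with h' | h'
      · exact absurd h' hfx
      · by_cases hc : f x = x
        · exact absurd hc hfx
        · exact (hsf x hx).1
  have hcyc : h.IsCycle := by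
    refine ⟨x, hxmem, fun z hz => ?_⟩
    have hzs : z ∈ h.support := mem_support.mpr hz
    have hsub : z ∈ (swap x y).support ∪ (f * g).support := support_mul_le (swap x y) (f*g) hzs
    have hsub2 : z ∈ ({x, y} : Finset α) ∪ (f.support ∪ g.support) := by
      rcases Finset.mem_union.mp hsub with h1 | h2
      · rw [support_swap hxy] at h1; exact Finset.mem_union_left _ h1
      · exact Finset.mem_union_right _ (support_mul_le f g h2)
    simp only [Finset.mem_union, Finset.mem_insert, Finset.mem_singleton] at hsub2
    rcases hsub2 with (rfl | rfl) | hzf | hzg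
    · exact SameCycle.refl _ _
    · exact hlink
    · obtain ⟨i, hi⟩ := hf.exists_pow_eq (mem_support.mp hx) (mem_support.mp hzf)
      exact hi ▸ keyf i
    · obtain ⟨i, hi⟩ := hg.exists_pow_eq (mem_support.mp hy) (mem_support.mp hzg)
      exact hlink.trans (hi ▸ keyg i)
  refine ⟨hcyc, Finset.Subset.antisymm ?_ ?_⟩
  · intro z hz
    have hsub : z ∈ (swap x y).support ∪ (f * g).support := support_mul_le (swap x y) (f*g) hz
    rcases Finset.mem_union.mp hsub with h1 | h2
    · rw [support_swap hxy] at h1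
      rcases Finset.mem_insert.mp h1 with rfl | h1
      · exact Finset.mem_union_left _ hx
      · rw [Finset.mem_singleton.mp h1]; exact Finset.mem_union_right _ hy
    · exact support_mul_le f g h2
  · intro z hz
    rcases Finset.mem_union.mp hz with hzf | hzg
    · exact mem_support.mpr (hsf z hzf).1
    · exact mem_support.mpr (hsg z hzg).1

/-- After multiplying a cycle through `x, y` by `swap x y`, the points `x` and `y`
are no longer in the same cycle. -/
lemma split_not_sameCycle {c : Perm α} {x y : α} (hc : c.IsCycle)
    (hx : x ∈ c.support) (hy : y ∈ c.support) (hxy : x ≠ y) :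
    ¬ (swap x y * c).SameCycle x y := by
  set h : Perm α := swap x y * c with hh
  -- find the minimal positive j with c^j x = y
  obtain ⟨i, hi⟩ := hc.exists_pow_eq (mem_support.mp hx) (mem_support.mp hy)
  have hiex : ∃ j, 0 < j ∧ (c ^ j) x = y := by
    refine ⟨i, ?_, hi⟩
    rcases Nat.eq_zero_or_pos i with rfl | hpos
    · simp at hi; exact absurd hi hxy
    · exact hpos
  classical
  set j := Nat.find hiex with hj
  obtain ⟨hj0, hjy⟩ : 0 < j ∧ (c ^ j) x = y := Nat.find_spec hiex
  have hjmin : ∀ i', i' < j → ¬(0 < i' ∧ (c ^ i') x = y) := fun i' hi' => Nat.find_min hiex hi'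
  set S : Finset α := (Finset.range j).image (fun i => (c ^ i) x) with hS
  have hxS : x ∈ S := by
    apply Finset.mem_image.mpr
    exact ⟨0, Finset.mem_range.mpr hj0, by simp⟩
  have hyS : y ∉ S := by
    intro hmem
    obtain ⟨i', hi', hie⟩ := Finset.mem_image.mp hmem
    rw [Finset.mem_range] at hi'
    rcases Nat.eq_zero_or_pos i' with rfl | hpos
    · simp at hie; exact hxy hie
    · exact hjmin i' hi' ⟨hpos, hie⟩
  -- no intermediate return to x
  have hnoret : ∀ i', i' < j → (c ^ (i'+1)) x ≠ x := by
    intro i' hi' hret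
    rcases Nat.lt_or_ge (i'+1) j with hlt | hge
    · -- then c^(j-(i'+1)) x = y with smaller positive exponent
      have : (c ^ (j - (i'+1))) x = y := by
        have : (c ^ (j - (i'+1))) ((c ^ (i'+1)) x) = (c ^ j) x := by
          have he : j - (i'+1) + (i'+1) = j := by omega
          rw [← mul_apply, ← pow_add, he]
        rw [hret] at this
        rw [this, hjy]
      exact hjmin (j - (i'+1)) (by omega) ⟨by omega, this⟩
    · have : i' + 1 = j := by omega
      rw [this, hjy] at hret
      exact hxy hret.symm
  -- S is closed under h
  have hclosed : ∀ z ∈ S, h z ∈ S := by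
    intro z hz
    obtain ⟨i', hi', rfl⟩ := Finset.mem_image.mp hz
    rw [Finset.mem_range] at hi'
    have hcz : h ((c ^ i') x) = swap x y ((c ^ (i'+1)) x) := by
      have : (c ^ (i'+1)) x = c ((c ^ i') x) := by rw [_root_.pow_succ', mul_apply]
      rw [this]
      rfl
    by_cases hcy : (c ^ (i'+1)) x = y
    · rw [hcz, hcy, swap_apply_right]
      exact hxS
    · have hcx : (c ^ (i'+1)) x ≠ x := hnoret i' hi'
      rw [hcz, swap_apply_of_ne_of_ne hcx hcy]
      apply Finset.mem_image.mpr
      refine ⟨i'+1, Finset.mem_range.mpr ?_, rfl⟩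
      rcases Nat.lt_or_ge (i'+1) j with hlt | hge
      · exact hlt
      · exfalso; exact hcy (by rw [show i'+1 = j by omega, hjy])
  -- hence closed under h⁻¹ as well
  have himg : S.image h = S := by
    apply Finset.eq_of_subset_of_card_le
    · intro z hz
      obtain ⟨w, hw, rfl⟩ := Finset.mem_image.mp hz
      exact hclosed w hw
    · rw [Finset.card_image_of_injective _ h.injective]
  have hclosedinv : ∀ z ∈ S, h⁻¹ z ∈ S := by
    intro z hz
    rw [← himg] at hz
    obtain ⟨w, hw, rfl⟩ := Finset.mem_image.mp hz
    rwa [← mul_apply, inv_mul_cancel, one_apply]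
  -- all z-powers of h stay in S
  have hall : ∀ n : ℤ, (h ^ n) x ∈ S := by
    intro n
    induction n using Int.induction_on with
    | zero => simpa using hxS
    | succ n ih =>
      have e : (h ^ ((n : ℤ) + 1)) x = h ((h ^ (n : ℤ)) x) := by
        rw [add_comm, zpow_add, zpow_one, mul_apply]
      rw [e]
      exact hclosed _ ih
    | pred n ih =>
      have e : (h ^ (-(n : ℤ) - 1)) x = h⁻¹ ((h ^ (-(n : ℤ))) x) := by
        rw [sub_eq_add_neg, add_comm, zpow_add, zpow_neg_one, mul_apply]
      rw [e]
      exact hclosedinv _ ih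
  rintro ⟨n, hn⟩
  exact hyS (hn ▸ hall n)

/-- The product of `catalan (μᵢ - 1)` over the cycle type. -/
def ctp (π : Perm α) : ℕ := (π.cycleType.map fun m => catalan (m - 1)).prod

lemma ctp_mul {f g : Perm α} (h : f.Disjoint g) : ctp (f * g) = ctp f * ctp g := by
  rw [ctp, h.cycleType_mul, Multiset.map_add, Multiset.prod_add]; rfl

lemma ctp_cycle {f : Perm α} (h : f.IsCycle) : ctp f = catalan (f.support.card - 1) := by
  rw [ctp, h.cycleType]
  simp

lemma ctp_one : ctp (1 : Perm α) = 1 := by simp [ctp]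

lemma ctp_pos (f : Perm α) : 0 < ctp f := by
  rw [ctp]
  apply Multiset.prod_pos
  intro a ha
  obtain ⟨m, _, rfl⟩ := Multiset.mem_map.mp ha
  exact catalan_pos' _

lemma mset_aux {A : Multiset ℕ} {m t : ℕ} (h : ({m} : Multiset ℕ) = A + {t}) :
    A = 0 ∧ t = m := by
  have hc := congrArg Multiset.card h
  simp only [Multiset.card_singleton, Multiset.card_add] at hc
  have hA : A = 0 := Multiset.card_eq_zero.mp (by omega)
  subst hA
  rw [zero_add] at h
  exact ⟨rfl, (Multiset.singleton_inj.mp h).symm⟩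

/-- Decomposition: pull out the cycle of `x`. -/
lemma decomp1 {σ : Perm α} {x : α} (hx : σ x ≠ x) :
    (σ * (σ.cycleOf x)⁻¹).Disjoint (σ.cycleOf x) ∧
      (σ * (σ.cycleOf x)⁻¹) * σ.cycleOf x = σ ∧
      (σ.cycleOf x).IsCycle ∧ x ∈ (σ.cycleOf x).support ∧
      (σ * (σ.cycleOf x)⁻¹).support ⊆ σ.support := by
  have hxs : x ∈ σ.support := mem_support.mpr hx
  have hc : σ.cycleOf x ∈ σ.cycleFactorsFinset := cycleOf_mem_cycleFactorsFinset_iff.mpr hxs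
  refine ⟨disjoint_mul_inv_of_mem_cycleFactorsFinset hc, inv_mul_cancel_right σ _,
    isCycle_cycleOf σ hx, mem_support_cycleOf_iff.mpr ⟨SameCycle.refl σ x, hxs⟩, ?_⟩
  intro z hz
  have := support_mul_le σ (σ.cycleOf x)⁻¹ hz
  rcases Finset.mem_union.mp this with h1 | h2
  · exact h1
  · rw [support_inv] at h2
    exact support_cycleOf_le σ x h2

/-- The merge case at the level of cycle types. -/
lemma mergeC {π : Perm α} {x y : α} (hx : π x ≠ x) (hy : π y ≠ y)
    (hns : ¬ π.SameCycle x y) :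
    ∃ (ρ : Perm α) (p q : ℕ), 2 ≤ p ∧ 2 ≤ q ∧ p + q ≤ Fintype.card α ∧
      (swap x y * π).cycleType = ρ.cycleType + {p + q} ∧
      π.cycleType = ρ.cycleType + ({p} + {q}) := by
  have hxy : x ≠ y := fun h => hns (h ▸ SameCycle.refl π x)
  have hys : y ∈ π.support := mem_support.mpr hy
  set d := π.cycleOf y with hd
  have hdfac : d ∈ π.cycleFactorsFinset := cycleOf_mem_cycleFactorsFinset_iff.mpr hys
  have hddisj : (π * d⁻¹).Disjoint d := disjoint_mul_inv_of_mem_cycleFactorsFinset hdfac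
  set π₁ := π * d⁻¹ with hπ₁
  have hπeq : π₁ * d = π := inv_mul_cancel_right π d
  have hdcyc : d.IsCycle := isCycle_cycleOf π hy
  have hyd : y ∈ d.support := mem_support_cycleOf_iff.mpr ⟨SameCycle.refl π y, hys⟩
  have hxd : x ∉ d.support := by
    intro hmem
    exact hns ((mem_support_cycleOf_iff.mp hmem).1.symm)
  have hdx : d x = x := by
    by_contra hcon
    exact hxd (mem_support.mpr hcon)
  have hdinvx : d⁻¹ x = x := by
    conv_lhs => rw [← hdx]
    exact Equiv.symm_apply_apply d x
  have hπ₁x : π₁ x = π x := by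
    rw [hπ₁, mul_apply, hdinvx]
  have hπ₁xne : π₁ x ≠ x := by rw [hπ₁x]; exact hx
  have hcx : π₁.cycleOf x = π.cycleOf x := by
    have := cycleOf_mul_of_apply_right_eq_self hddisj.commute x hdx
    rw [hπeq] at this
    exact this.symm
  set c := π₁.cycleOf x with hc
  obtain ⟨hρdisj, hρeq, hccyc, hxc, hρsupp⟩ := decomp1 hπ₁xne
  set ρ := π₁ * c⁻¹ with hρ
  -- c and d are disjoint
  have hπ₁d : _root_.Disjoint π₁.support d.support := disjoint_iff_disjoint_support.mp hddisj
  have hcsupp : c.support ⊆ π₁.support := support_cycleOf_le π₁ x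
  have hcd : c.Disjoint d := by
    rw [disjoint_iff_disjoint_support]
    exact Finset.disjoint_of_subset_left hcsupp hπ₁d
  have hρsupp₁ : ρ.support ⊆ π₁.support := hρsupp
  have hρc : _root_.Disjoint ρ.support c.support := disjoint_iff_disjoint_support.mp hρdisj
  have hρd : ρ.Disjoint d := by
    rw [disjoint_iff_disjoint_support]
    exact Finset.disjoint_of_subset_left hρsupp₁ hπ₁d
  have hπdecomp : π = ρ * (c * d) := by
    rw [← mul_assoc, hρeq, hπeq]
  -- swap commutes with ρ
  have hxρ : x ∉ ρ.support := Finset.disjoint_right.mp hρc hxc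
  have hyρ : y ∉ ρ.support := Finset.disjoint_right.mp (disjoint_iff_disjoint_support.mp hρd) hyd
  have hswapρ : (swap x y).Disjoint ρ := by
    rw [disjoint_iff_disjoint_support, support_swap hxy]
    rw [Finset.disjoint_left]
    intro z hz
    rcases Finset.mem_insert.mp hz with rfl | hz
    · exact hxρ
    · rw [Finset.mem_singleton.mp hz]; exact hyρ
  obtain ⟨hmcyc, hmsupp⟩ := merge_two hccyc hdcyc hcd hxc hyd
  have hcomm : swap x y * π = ρ * (swap x y * (c * d)) := by
    rw [hπdecomp, ← mul_assoc, hswapρ.commute.eq, mul_assoc]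
  have hρm : ρ.Disjoint (swap x y * (c * d)) := by
    rw [disjoint_iff_disjoint_support, hmsupp]
    rw [Finset.disjoint_union_right]
    exact ⟨hρc, disjoint_iff_disjoint_support.mp hρd⟩
  have hρcd : ρ.Disjoint (c * d) := by
    rw [disjoint_iff_disjoint_support]
    rw [Finset.disjoint_right]
    intro z hz
    have := support_mul_le c d hz
    rcases Finset.mem_union.mp this with h1 | h2
    · exact Finset.disjoint_right.mp hρc h1
    · exact Finset.disjoint_right.mp (disjoint_iff_disjoint_support.mp hρd) h2
  refine ⟨ρ, c.support.card, d.support.card, hccyc.two_le_card_support,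
    hdcyc.two_le_card_support, ?_, ?_, ?_⟩
  · rw [← Finset.card_union_of_disjoint (disjoint_iff_disjoint_support.mp hcd)]
    exact Finset.card_le_univ _
  · rw [hcomm, hρm.cycleType_mul, hmcyc.cycleType, hmsupp,
      Finset.card_union_of_disjoint (disjoint_iff_disjoint_support.mp hcd)]
  · rw [hπdecomp, hρcd.cycleType_mul, hcd.cycleType_mul, hccyc.cycleType, hdcyc.cycleType]

lemma caseA {σ : Perm α} {x y : α} (hxy : x ≠ y) (hx : σ x = x) (hy : σ y = y) :
    ctp (swap x y * σ) = ctp σ := by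
  have hd : (swap x y).Disjoint σ := by
    rw [disjoint_iff_disjoint_support, support_swap hxy, Finset.disjoint_left]
    intro z hz
    rcases Finset.mem_insert.mp hz with rfl | hz
    · exact notMem_support.mpr hx
    · rw [Finset.mem_singleton.mp hz]; exact notMem_support.mpr hy
  rw [ctp_mul hd, ctp_cycle (isCycle_swap hxy), card_support_swap hxy]
  simp [catalan_one]

lemma caseB {σ : Perm α} {x y : α} (hxy : x ≠ y) (hx : σ x ≠ x) (hy : σ y = y) :
    ctp (swap x y * σ) ≤ 4 * ctp σ := by
  obtain ⟨hρdisj, hρeq, hccyc, hxc, hρsupp⟩ := decomp1 hx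
  set c := σ.cycleOf x with hc
  set ρ := σ * c⁻¹ with hρ
  have hyσ : y ∉ σ.support := notMem_support.mpr hy
  have hyc : y ∉ c.support := fun hmem => hyσ (support_cycleOf_le σ x hmem)
  have hρc : _root_.Disjoint ρ.support c.support := disjoint_iff_disjoint_support.mp hρdisj
  have hxρ : x ∉ ρ.support := Finset.disjoint_right.mp hρc hxc
  have hyρ : y ∉ ρ.support := fun hmem => hyσ (hρsupp hmem)
  have hswapρ : (swap x y).Disjoint ρ := by
    rw [disjoint_iff_disjoint_support, support_swap hxy, Finset.disjoint_left]
    intro z hz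
    rcases Finset.mem_insert.mp hz with rfl | hz
    · exact hxρ
    · rw [Finset.mem_singleton.mp hz]; exact hyρ
  obtain ⟨hmcyc, hmsupp⟩ := merge_one hccyc hxc hyc
  have hcomm : swap x y * σ = ρ * (swap x y * c) := by
    rw [← hρeq, ← mul_assoc, hswapρ.commute.eq, mul_assoc]
  have hρm : ρ.Disjoint (swap x y * c) := by
    rw [disjoint_iff_disjoint_support, hmsupp, Finset.disjoint_insert_right]
    exact ⟨hyρ, hρc⟩
  have h1 : ctp (swap x y * σ) = ctp ρ * catalan ((insert y c.support).card - 1) := by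
    rw [hcomm, ctp_mul hρm, ctp_cycle hmcyc, hmsupp]
  have h2 : ctp σ = ctp ρ * catalan (c.support.card - 1) := by
    rw [← hρeq, ctp_mul hρdisj, ctp_cycle hccyc]
  have hm2 : 2 ≤ c.support.card := hccyc.two_le_card_support
  rw [h1, h2, Finset.card_insert_of_notMem hyc]
  have hcat : catalan (c.support.card + 1 - 1) ≤ 4 * catalan (c.support.card - 1) := by
    have hm : c.support.card + 1 - 1 = (c.support.card - 1) + 1 := by omega
    rw [hm]
    exact catalan_succ_le_four_mul _
  calc ctp ρ * catalan (c.support.card + 1 - 1)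
      ≤ ctp ρ * (4 * catalan (c.support.card - 1)) := Nat.mul_le_mul_left _ hcat
    _ = 4 * (ctp ρ * catalan (c.support.card - 1)) := by ring

/-- Split case where `y` becomes (or stays) fixed. -/
lemma splitAux {c : Perm α} {x y : α} (hc : c.IsCycle) (hxc : x ∈ c.support)
    (hyc : y ∈ c.support) (hxy : x ≠ y) (hhy : (swap x y * c) y = y) :
    ctp (swap x y * c) ≤ catalan (c.support.card - 1) := by
  set h : Perm α := swap x y * c with hh
  have hcback : swap x y * h = c := by
    rw [hh, ← mul_assoc, swap_mul_self, one_mul]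
  have hm2 : 2 ≤ c.support.card := hc.two_le_card_support
  by_cases hhx : h x = x
  · -- both fixed: h must be trivial on x,y; c = swap * h with h disjoint from swap
    have hd : (swap x y).Disjoint h := by
      intro z
      by_cases hz : z = x
      · exact Or.inr (hz ▸ hhx)
      · by_cases hz' : z = y
        · exact Or.inr (hz' ▸ hhy)
        · exact Or.inl (swap_apply_of_ne_of_ne hz hz')
    have htype : c.cycleType = (swap x y).cycleType + h.cycleType := by
      rw [← hcback, hd.cycleType_mul]
    rw [(isCycle_swap hxy).cycleType, card_support_swap hxy, hc.cycleType] at htype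
    have hA : h.cycleType = 0 := by
      have hcard := congrArg Multiset.card htype
      simp only [Multiset.coe_singleton, Multiset.card_singleton, Multiset.card_add] at hcard
      exact Multiset.card_eq_zero.mp (by omega)
    have : ctp h = 1 := by rw [ctp, hA]; simp
    rw [this]
    exact catalan_pos' _
  · -- x still moves in h, y fixed: h is a single cycle of length m - 1
    obtain ⟨hρdisj, hρeq, hecyc, hxe, hρsupp⟩ := decomp1 hhx
    set e := h.cycleOf x with he
    set ρ := h * e⁻¹ with hρdef
    have hyh : y ∉ h.support := notMem_support.mpr hhy
    have hye : y ∉ e.support := fun hmem => hyh (support_cycleOf_le h x hmem)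
    have hρc : _root_.Disjoint ρ.support e.support := disjoint_iff_disjoint_support.mp hρdisj
    have hxρ : x ∉ ρ.support := Finset.disjoint_right.mp hρc hxe
    have hyρ : y ∉ ρ.support := fun hmem => hyh (hρsupp hmem)
    have hswapρ : (swap x y).Disjoint ρ := by
      rw [disjoint_iff_disjoint_support, support_swap hxy, Finset.disjoint_left]
      intro z hz
      rcases Finset.mem_insert.mp hz with rfl | hz
      · exact hxρ
      · rw [Finset.mem_singleton.mp hz]; exact hyρ
    obtain ⟨hmcyc, hmsupp⟩ := merge_one hecyc hxe hye
    have hcomm : c = ρ * (swap x y * e) := by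
      rw [← hcback, ← hρeq, ← mul_assoc, hswapρ.commute.eq, mul_assoc]
    have hρm : ρ.Disjoint (swap x y * e) := by
      rw [disjoint_iff_disjoint_support, hmsupp, Finset.disjoint_insert_right]
      exact ⟨hyρ, hρc⟩
    have htype : c.cycleType = ρ.cycleType + {e.support.card + 1} := by
      rw [hcomm, hρm.cycleType_mul, hmcyc.cycleType, hmsupp, Finset.card_insert_of_notMem hye]
    rw [hc.cycleType] at htype
    have htype' : ({c.support.card} : Multiset ℕ) = ρ.cycleType + {e.support.card + 1} := by
      rw [← htype]
    obtain ⟨hA, hm⟩ := mset_aux htype'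
    have hctph : ctp h = catalan (e.support.card - 1) := by
      rw [← hρeq, ctp_mul hρdisj, ctp_cycle hecyc, ctp, hA]
      simp
    rw [hctph]
    have : e.support.card - 1 + 1 = c.support.card - 1 := by omega
    calc catalan (e.support.card - 1) ≤ catalan (e.support.card - 1 + 1) := catalan_le_succ _
      _ = catalan (c.support.card - 1) := by rw [this]

lemma splitBound {c : Perm α} {x y : α} (hc : c.IsCycle) (hxc : x ∈ c.support)
    (hyc : y ∈ c.support) (hxy : x ≠ y) :
    ctp (swap x y * c) ≤ catalan (c.support.card - 1) := by
  by_cases hhy : (swap x y * c) y = y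
  · exact splitAux hc hxc hyc hxy hhy
  by_cases hhx : (swap x y * c) x = x
  · rw [swap_comm]
    refine splitAux hc hyc hxc hxy.symm ?_
    rwa [swap_comm y x]
  · -- both move in h := swap x y * c, and are in different cycles
    have hns := split_not_sameCycle hc hxc hyc hxy
    set h : Perm α := swap x y * c with hh
    have hcback : swap x y * h = c := by
      rw [hh, ← mul_assoc, swap_mul_self, one_mul]
    obtain ⟨ρ, p, q, hp, hq, _, htype1, htype2⟩ := mergeC hhx hhy hns
    rw [hcback, hc.cycleType] at htype1
    have htype1' : ({c.support.card} : Multiset ℕ) = ρ.cycleType + {p + q} := by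
      rw [← htype1]
    obtain ⟨hA, hm⟩ := mset_aux htype1'
    have hctph : ctp h = catalan (p - 1) * catalan (q - 1) := by
      rw [ctp, htype2, hA]
      simp
    rw [hctph]
    have he : (p - 1) + (q - 1) + 1 = p + q - 1 := by omega
    have hm' : p + q - 1 = c.support.card - 1 := by omega
    calc catalan (p-1) * catalan (q-1) ≤ catalan ((p-1) + (q-1) + 1) := catalan_mul_le_add _ _
      _ = catalan (c.support.card - 1) := by rw [he, hm']

lemma caseD {σ : Perm α} {x y : α} (hxy : x ≠ y) (hx : σ x ≠ x) (hsc : σ.SameCycle x y) :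
    ctp (swap x y * σ) ≤ ctp σ := by
  obtain ⟨hρdisj, hρeq, hccyc, hxc, hρsupp⟩ := decomp1 hx
  set c := σ.cycleOf x with hcdef
  set ρ := σ * c⁻¹ with hρ
  have hxs : x ∈ σ.support := mem_support.mpr hx
  have hyc : y ∈ c.support := mem_support_cycleOf_iff.mpr ⟨hsc, hxs⟩
  have hρc : _root_.Disjoint ρ.support c.support := disjoint_iff_disjoint_support.mp hρdisj
  have hxρ : x ∉ ρ.support := Finset.disjoint_right.mp hρc hxc
  have hyρ : y ∉ ρ.support := Finset.disjoint_right.mp hρc hyc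
  have hswapρ : (swap x y).Disjoint ρ := by
    rw [disjoint_iff_disjoint_support, support_swap hxy, Finset.disjoint_left]
    intro z hz
    rcases Finset.mem_insert.mp hz with rfl | hz
    · exact hxρ
    · rw [Finset.mem_singleton.mp hz]; exact hyρ
  have hcomm : swap x y * σ = ρ * (swap x y * c) := by
    rw [← hρeq, ← mul_assoc, hswapρ.commute.eq, mul_assoc]
  have hsub : (swap x y * c).support ⊆ c.support := by
    intro z hz
    have := support_mul_le (swap x y) c hz
    rcases Finset.mem_union.mp this with h1 | h2
    · rw [support_swap hxy] at h1
      rcases Finset.mem_insert.mp h1 with rfl | h1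
      · exact hxc
      · rw [Finset.mem_singleton.mp h1]; exact hyc
    · exact h2
  have hρm : ρ.Disjoint (swap x y * c) := by
    rw [disjoint_iff_disjoint_support]
    exact Finset.disjoint_of_subset_right hsub hρc
  rw [hcomm, ctp_mul hρm]
  have h2 : ctp σ = ctp ρ * catalan (c.support.card - 1) := by
    rw [← hρeq, ctp_mul hρdisj, ctp_cycle hccyc]
  rw [h2]
  exact Nat.mul_le_mul_left _ (splitBound hccyc hxc hyc hxy)

/-- `Moeb(σ) = ∏_i Cat(μ_i − 1)` over the cycle type `μ` of `σ`
(fixed points contribute `Cat(0) = 1`, so only nontrivial cycles matter). -/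
def moeb {k : ℕ} (σ : Equiv.Perm (Fin k)) : ℕ :=
  (σ.cycleType.map fun m => catalan (m - 1)).prod

/-- For `σ ∈ S_k` and any transposition `τ ∈ S_k`,
`Moeb(τσ) ≤ 6·k^(3/2)·Moeb(σ)`. -/
theorem moeb_swap_mul_le {k : ℕ} (σ τ : Equiv.Perm (Fin k)) (hτ : τ.IsSwap) :
    (moeb (τ * σ) : ℝ) ≤ 6 * (k : ℝ) ^ ((3 : ℝ) / 2) * moeb σ := by
  obtain ⟨x, y, hxy, rfl⟩ := hτ
  have hk : 1 ≤ k := x.pos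
  have hk32 : (1:ℝ) ≤ (k:ℝ) ^ ((3:ℝ)/2) := by
    calc (1:ℝ) = (1:ℝ) ^ ((3:ℝ)/2) := (Real.one_rpow _).symm
      _ ≤ (k:ℝ) ^ ((3:ℝ)/2) :=
        Real.rpow_le_rpow (by norm_num) (by exact_mod_cast hk) (by norm_num)
  have hmoeb : ∀ π : Equiv.Perm (Fin k), moeb π = ctp π := fun π => rfl
  have hσ0 : (0:ℝ) ≤ (ctp σ : ℝ) := by positivity
  rw [hmoeb, hmoeb]
  by_cases hx : σ x = x
  · by_cases hy : σ y = y
    · rw [caseA hxy hx hy]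
      nlinarith
    · rw [swap_comm]
      have hb : ctp (swap y x * σ) ≤ 4 * ctp σ := caseB hxy.symm hy hx
      calc (ctp (swap y x * σ) : ℝ) ≤ 4 * ctp σ := by exact_mod_cast hb
        _ ≤ 6 * (k:ℝ)^((3:ℝ)/2) * ctp σ := by nlinarith
  · by_cases hy : σ y = y
    · have hb : ctp (swap x y * σ) ≤ 4 * ctp σ := caseB hxy hx hy
      calc (ctp (swap x y * σ) : ℝ) ≤ 4 * ctp σ := by exact_mod_cast hb
        _ ≤ 6 * (k:ℝ)^((3:ℝ)/2) * ctp σ := by nlinarith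
    · by_cases hsc : σ.SameCycle x y
      · have hb : ctp (swap x y * σ) ≤ ctp σ := caseD hxy hx hsc
        calc (ctp (swap x y * σ) : ℝ) ≤ ctp σ := by exact_mod_cast hb
          _ ≤ 6 * (k:ℝ)^((3:ℝ)/2) * ctp σ := by nlinarith
      · obtain ⟨ρ, p, q, hp, hq, hpq, ht1, ht2⟩ := mergeC hx hy hsc
        rw [Fintype.card_fin] at hpq
        have h1 : ctp (swap x y * σ) = ctp ρ * catalan (p + q - 1) := by
          rw [ctp, ht1, Multiset.map_add, Multiset.prod_add]
          simp [ctp]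
        have h2 : ctp σ = ctp ρ * (catalan (p - 1) * catalan (q - 1)) := by
          rw [ctp, ht2, Multiset.map_add, Multiset.prod_add]
          simp [ctp, Multiset.map_add, Multiset.prod_add]
        have hkey : (catalan (p + q - 1) : ℝ)
            ≤ 6 * (k:ℝ)^((3:ℝ)/2) * (catalan (p-1) * catalan (q-1)) := by
          have ha : 1 ≤ p - 1 := by omega
          have hb : 1 ≤ q - 1 := by omega
          have hab : (p-1) + (q-1) + 2 ≤ k := by omega
          have := key_real ha hb hab
          have he : (p-1) + (q-1) + 1 = p + q - 1 := by omega
          rwa [he] at this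
        rw [h1, h2]
        have hρ0 : (0:ℝ) ≤ (ctp ρ : ℝ) := by positivity
        push_cast
        nlinarith [mul_le_mul_of_nonneg_left hkey hρ0]
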